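/- arXiv:1004.4921 — 5 statements merged into one kernel-verified Lean document; each statement's English description precedes it below -/
import Mathlib

section
/- With the ILS data and M₁, M₂ as in the context, let a > 0 and β > 0 be normalizing scalars, and assume x ≠ 0, r ≠ 0, and M₁ − M₂ ≠ 0. Define χ_A = (a/‖x‖₂)·‖M₁ − M₂‖₂, ℬ = (a/‖x‖₂)·(‖M₁‖₂ + ‖M₂‖₂), χ_b = β·‖M₂‖₂/‖x‖₂², ρ = (ℬ + χ_b)/(χ_A + χ_b), λ₁ = (‖M₁‖₂ + ‖M₂‖₂)/‖M₁ − M₂‖₂, and λ₂ = a·‖x‖₂/β. Then λ₁ ≥ ρ, λ₂ ≥ ρ/2 − 1, and at least one of the two inequalities 2ρ ≥ λ₁ and ρ + 1/2 ≥ λ₂ holds. -/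
open Matrix

/-- Euclidean (ℓ²) norm of a vector. -/
noncomputable def eNorm {p : Type*} [Fintype p] (v : p → ℝ) : ℝ :=
  Real.sqrt (∑ i, (v i) ^ 2)

/-- Frobenius norm of a matrix. -/
noncomputable def frobNorm {p q : Type*} [Fintype p] [Fintype q]
    (M : Matrix p q ℝ) : ℝ :=
  Real.sqrt (∑ i, ∑ j, (M i j) ^ 2)

/-- Spectral (ℓ² operator) norm of a matrix. -/
noncomputable def specNorm {p q : Type*} [Fintype p] [Fintype q] [DecidableEq q]
    (M : Matrix p q ℝ) : ℝ :=
  ‖LinearMap.toContinuousLinearMap (Matrix.toEuclideanLin M)‖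

/-- Solution of the indefinite least squares problem: `x = (AᵀJA)⁻¹AᵀJb`. -/
noncomputable def ilsX {m n : ℕ} (A : Matrix (Fin m) (Fin n) ℝ)
    (J : Matrix (Fin m) (Fin m) ℝ) (b : Fin m → ℝ) : Fin n → ℝ :=
  ((Aᵀ * J * A)⁻¹ * Aᵀ * J) *ᵥ b

/-- Residual of the indefinite least squares problem: `r = b - Ax`. -/
noncomputable def ilsR {m n : ℕ} (A : Matrix (Fin m) (Fin n) ℝ)
    (J : Matrix (Fin m) (Fin m) ℝ) (b : Fin m → ℝ) : Fin m → ℝ :=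
  b - A *ᵥ (ilsX A J b)

/-- `M₁ = (AᵀJA)⁻¹ ⊗ (Jr)ᵀ`, realized as an `n × (n·m)` matrix whose column
index `(j, k)` corresponds to entry `(k, j)` of the perturbation matrix. -/
noncomputable def ilsM1 {m n : ℕ} (A : Matrix (Fin m) (Fin n) ℝ)
    (J : Matrix (Fin m) (Fin m) ℝ) (b : Fin m → ℝ) :
    Matrix (Fin n) (Fin n × Fin m) ℝ :=
  Matrix.of fun i jk => (Aᵀ * J * A)⁻¹ i jk.1 * (J *ᵥ (ilsR A J b)) jk.2

/-- `M₂ = xᵀ ⊗ (AᵀJA)⁻¹AᵀJ`, realized as an `n × (n·m)` matrix. -/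
noncomputable def ilsM2 {m n : ℕ} (A : Matrix (Fin m) (Fin n) ℝ)
    (J : Matrix (Fin m) (Fin m) ℝ) (b : Fin m → ℝ) :
    Matrix (Fin n) (Fin n × Fin m) ℝ :=
  Matrix.of fun i jk => (ilsX A J b) jk.1 * ((Aᵀ * J * A)⁻¹ * Aᵀ * J) i jk.2


lemma specNorm_nonneg' {p q : Type*} [Fintype p] [Fintype q] [DecidableEq q]
    (M : Matrix p q ℝ) : 0 ≤ specNorm M := norm_nonneg _

lemma specNorm_pos' {p q : Type*} [Fintype p] [Fintype q] [DecidableEq q]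
    (M : Matrix p q ℝ) (hM : M ≠ 0) : 0 < specNorm M := by
  unfold specNorm
  rw [norm_pos_iff]
  simp [LinearEquiv.map_eq_zero_iff, hM]

lemma specNorm_sub_le' {p q : Type*} [Fintype p] [Fintype q] [DecidableEq q]
    (M N : Matrix p q ℝ) : specNorm (M - N) ≤ specNorm M + specNorm N := by
  unfold specNorm
  rw [map_sub, map_sub]
  exact norm_sub_le _ _

lemma specNorm_sub_ge' {p q : Type*} [Fintype p] [Fintype q] [DecidableEq q]
    (M N : Matrix p q ℝ) : specNorm M - specNorm N ≤ specNorm (M - N) := by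
  unfold specNorm
  rw [map_sub, map_sub]
  exact norm_sub_norm_le _ _

lemma specNorm_sub_ge₂' {p q : Type*} [Fintype p] [Fintype q] [DecidableEq q]
    (M N : Matrix p q ℝ) : specNorm N - specNorm M ≤ specNorm (M - N) := by
  have h : M - N = -(N - M) := by rw [neg_sub]
  have : specNorm (M - N) = specNorm (N - M) := by
    rw [h]; unfold specNorm; rw [map_neg, map_neg, norm_neg]
  rw [this]
  exact specNorm_sub_ge' N M

lemma eNorm_pos' {p : Type*} [Fintype p] (v : p → ℝ) (hv : v ≠ 0) : 0 < eNorm v := by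
  unfold eNorm
  apply Real.sqrt_pos.mpr
  obtain ⟨i, hi⟩ := Function.ne_iff.mp hv
  refine Finset.sum_pos' (fun _ _ => sq_nonneg _) ⟨i, Finset.mem_univ i, ?_⟩
  have : v i ≠ 0 := by simpa using hi
  positivity

/-- Theorem 3.3 of the paper: relations among `ρ`, `λ₁`, `λ₂` that characterize
when the Bojanczyk–Higham–Patel bound is an overestimate. -/
theorem stmt_3 (m n : ℕ) (hmn : m > n) (hn : n ≥ 1)
    (A : Matrix (Fin m) (Fin n) ℝ) (b : Fin m → ℝ)
    (d : Fin m → ℝ) (hd : ∀ i, d i = 1 ∨ d i = -1)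
    (J : Matrix (Fin m) (Fin m) ℝ) (hJ : J = Matrix.diagonal d)
    (hpd : (Aᵀ * J * A).PosDef)
    (a β : ℝ) (ha : 0 < a) (hβ : 0 < β)
    (hx : ilsX A J b ≠ 0) (hr : ilsR A J b ≠ 0)
    (hM : ilsM1 A J b - ilsM2 A J b ≠ 0)
    (χA ℬ χb ρ lam₁ lam₂ : ℝ)
    (hχA : χA = (a / eNorm (ilsX A J b)) * specNorm (ilsM1 A J b - ilsM2 A J b))
    (hℬ : ℬ = (a / eNorm (ilsX A J b)) * (specNorm (ilsM1 A J b) + specNorm (ilsM2 A J b)))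
    (hχb : χb = β * specNorm (ilsM2 A J b) / (eNorm (ilsX A J b)) ^ 2)
    (hρ : ρ = (ℬ + χb) / (χA + χb))
    (hlam₁ : lam₁ = (specNorm (ilsM1 A J b) + specNorm (ilsM2 A J b)) /
      specNorm (ilsM1 A J b - ilsM2 A J b))
    (hlam₂ : lam₂ = a * eNorm (ilsX A J b) / β) :
    ρ ≤ lam₁ ∧ ρ / 2 - 1 ≤ lam₂ ∧ (lam₁ ≤ 2 * ρ ∨ lam₂ ≤ ρ + 1 / 2) := by
  set s := eNorm (ilsX A J b) with hs_def
  set N1 := specNorm (ilsM1 A J b) with hN1_def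
  set N2 := specNorm (ilsM2 A J b) with hN2_def
  set D := specNorm (ilsM1 A J b - ilsM2 A J b) with hD_def
  have hs : 0 < s := eNorm_pos' _ hx
  have hN1 : 0 ≤ N1 := specNorm_nonneg' _
  have hN2 : 0 ≤ N2 := specNorm_nonneg' _
  have hD : 0 < D := specNorm_pos' _ hM
  have tri1 : D ≤ N1 + N2 := specNorm_sub_le' _ _
  have tri2 : N1 - N2 ≤ D := specNorm_sub_ge' _ _
  have tri3 : N2 - N1 ≤ D := specNorm_sub_ge₂' _ _
  clear_value s N1 N2 D
  have hA0 : 0 < χA := by rw [hχA]; exact mul_pos (div_pos ha hs) hD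
  have hb0 : 0 ≤ χb := by
    rw [hχb]; exact div_nonneg (mul_nonneg hβ.le hN2) (sq_nonneg s)
  have hden : 0 < χA + χb := by linarith
  have hl2 : 0 < lam₂ := by rw [hlam₂]; exact div_pos (mul_pos ha hs) hβ
  have eB : ℬ = lam₁ * χA := by
    rw [hℬ, hlam₁, hχA]; field_simp
  have hlam1_one : 1 ≤ lam₁ := by
    rw [hlam₁, le_div_iff₀ hD]; linarith
  have hlam1_0 : 0 ≤ lam₁ := by linarith
  have e1 : χA * s = a * D := by rw [hχA]; field_simp
  have e2 : ℬ * s = a * (N1 + N2) := by rw [hℬ]; field_simp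
  have e3 : χb * s ^ 2 = β * N2 := by rw [hχb]; field_simp
  have e5 : lam₂ * β = a * s := by rw [hlam₂]; field_simp
  have key : lam₂ * (χb * s) = a * N2 := by
    have h2 : lam₂ * (χb * s) * s = a * N2 * s := by
      have h3 : lam₂ * (χb * s ^ 2) = (lam₂ * β) * N2 := by rw [e3]; ring
      rw [e5] at h3; linear_combination h3
    exact mul_right_cancel₀ hs.ne' h2
  clear hχA hℬ hχb hlam₁ hlam₂ hs_def hN1_def hN2_def hD_def
  clear hpd hd hJ hM hx hr hmn hn A b d J
  refine ⟨?_, ?_, ?_⟩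
  · rw [hρ, div_le_iff₀ hden, eB]
    nlinarith [mul_nonneg (sub_nonneg.mpr hlam1_one) hb0]
  · have h : ρ ≤ 2 * lam₂ + 2 := by
      rw [hρ, div_le_iff₀ hden, ← mul_le_mul_iff_of_pos_right hs]
      nlinarith [e1, e2, key, mul_le_mul_of_nonneg_left tri2 ha.le,
        mul_nonneg hl2.le (mul_pos hA0 hs).le, mul_nonneg hb0 hs.le,
        mul_nonneg ha.le hD.le, mul_nonneg ha.le hN2]
    linarith
  · by_cases hc : χb ≤ χA
    · left
      rw [hρ, eB, ← mul_div_assoc, le_div_iff₀ hden]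
      nlinarith [mul_le_mul_of_nonneg_left hc hlam1_0]
    · right
      have hc' : χA ≤ χb := le_of_not_ge hc
      have h : lam₂ - 1 / 2 ≤ (ℬ + χb) / (χA + χb) := by
        rw [le_div_iff₀ hden, ← mul_le_mul_iff_of_pos_right hs]
        nlinarith [e1, e2, key,
          mul_le_mul_of_nonneg_left (mul_le_mul_of_nonneg_right hc' hs.le) hl2.le,
          mul_le_mul_of_nonneg_left tri3 ha.le,
          mul_le_mul_of_nonneg_right hc' hs.le,
          mul_nonneg (mul_pos hA0 hs).le hl2.le,
          mul_nonneg hb0 hs.le, mul_nonneg hA0.le hs.le]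
      rw [hρ]; linarith
end

section
/- With the ILS data as in the context, the map f from real m×n matrices to ℝⁿ defined by f(M) = (MᵀJM)⁻¹MᵀJb is Fréchet differentiable at A, and its derivative at A is the linear map ΔA ↦ (AᵀJA)⁻¹(ΔAᵀJr) − (AᵀJA)⁻¹AᵀJ(ΔA·x), where r = b − Ax and x = f(A). -/
open Matrix

attribute [local instance]
  Matrix.frobeniusSeminormedAddCommGroup
  Matrix.frobeniusNormedAddCommGroup
  Matrix.frobeniusNormedSpace


attribute [local instance]
  Matrix.frobeniusNormedRing
  Matrix.frobeniusNormedAlgebra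

noncomputable def mulCLM (k l p : ℕ) :
    Matrix (Fin k) (Fin l) ℝ →L[ℝ] Matrix (Fin l) (Fin p) ℝ →L[ℝ] Matrix (Fin k) (Fin p) ℝ :=
  LinearMap.toContinuousLinearMap
    { toFun := fun X => LinearMap.toContinuousLinearMap
        { toFun := fun Y => X * Y
          map_add' := fun Y Z => Matrix.mul_add X Y Z
          map_smul' := fun c Y => (Matrix.mul_smul X c Y) }
      map_add' := by intro X Y; ext Z; simp [Matrix.add_mul]
      map_smul' := by intro c X; ext Z; simp [Matrix.smul_mul] }

@[simp] lemma mulCLM_apply (k l p : ℕ) (X : Matrix (Fin k) (Fin l) ℝ)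
    (Y : Matrix (Fin l) (Fin p) ℝ) : mulCLM k l p X Y = X * Y := rfl

noncomputable def mulVecCLM (k l : ℕ) :
    Matrix (Fin k) (Fin l) ℝ →L[ℝ] (Fin l → ℝ) →L[ℝ] (Fin k → ℝ) :=
  LinearMap.toContinuousLinearMap
    { toFun := fun X => LinearMap.toContinuousLinearMap
        { toFun := fun v => X *ᵥ v
          map_add' := fun v w => Matrix.mulVec_add X v w
          map_smul' := fun c v => by simp [Matrix.mulVec_smul] }
      map_add' := by intro X Y; ext v; simp [Matrix.add_mulVec]
      map_smul' := by intro c X; ext v; simp [Matrix.smul_mulVec] }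

@[simp] lemma mulVecCLM_apply (k l : ℕ) (X : Matrix (Fin k) (Fin l) ℝ)
    (v : Fin l → ℝ) : mulVecCLM k l X v = X *ᵥ v := rfl

lemma key_ils {m n : ℕ} (X : Matrix (Fin n) (Fin n) ℝ) (A ΔA : Matrix (Fin m) (Fin n) ℝ)
    (J : Matrix (Fin m) (Fin m) ℝ) (b : Fin m → ℝ) :
    X *ᵥ (ΔAᵀ *ᵥ (J *ᵥ b)) + (-(X * (Aᵀ * J * ΔA + ΔAᵀ * J * A) * X)) *ᵥ (Aᵀ *ᵥ (J *ᵥ b))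
    = X *ᵥ (ΔAᵀ *ᵥ (J *ᵥ (b - A *ᵥ ((X * Aᵀ * J) *ᵥ b))))
      - (X * Aᵀ * J) *ᵥ (ΔA *ᵥ ((X * Aᵀ * J) *ᵥ b)) := by
  simp only [Matrix.mulVec_mulVec, Matrix.neg_mulVec, Matrix.mulVec_sub, Matrix.sub_mulVec,
    Matrix.add_mul, Matrix.mul_add, Matrix.mul_sub, Matrix.sub_mul]
  simp only [Matrix.neg_mul, Matrix.mul_neg, Matrix.neg_mulVec, Matrix.add_mul, Matrix.mul_add,
    Matrix.add_mulVec, Matrix.mulVec_sub, Matrix.sub_mulVec, Matrix.mul_assoc]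
  abel

set_option maxHeartbeats 1000000 in
/-- The map `f(M) = (MᵀJM)⁻¹MᵀJb` is Fréchet differentiable at `A`, with
derivative `ΔA ↦ (AᵀJA)⁻¹(ΔAᵀJr) − (AᵀJA)⁻¹AᵀJ(ΔA·x)`. -/
theorem stmt_4 (m n : ℕ) (hmn : m > n) (hn : n ≥ 1)
    (A : Matrix (Fin m) (Fin n) ℝ) (b : Fin m → ℝ)
    (d : Fin m → ℝ) (hd : ∀ i, d i = 1 ∨ d i = -1)
    (J : Matrix (Fin m) (Fin m) ℝ) (hJ : J = Matrix.diagonal d)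
    (hpd : (Aᵀ * J * A).PosDef) :
    ∃ L : Matrix (Fin m) (Fin n) ℝ →L[ℝ] EuclideanSpace ℝ (Fin n),
      HasFDerivAt
        (fun M : Matrix (Fin m) (Fin n) ℝ =>
          ((WithLp.equiv 2 (Fin n → ℝ)).symm (ilsX M J b) : EuclideanSpace ℝ (Fin n)))
        L A ∧
      ∀ ΔA : Matrix (Fin m) (Fin n) ℝ,
        L ΔA = (WithLp.equiv 2 (Fin n → ℝ)).symm
          ((Aᵀ * J * A)⁻¹ *ᵥ (ΔAᵀ *ᵥ (J *ᵥ ilsR A J b))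
            - ((Aᵀ * J * A)⁻¹ * Aᵀ * J) *ᵥ (ΔA *ᵥ ilsX A J b)) := by
  classical
  set S : Matrix (Fin n) (Fin n) ℝ := Aᵀ * J * A with hSdef
  have hS : IsUnit S := hpd.isUnit
  -- transpose-and-multiply-by-J linear map
  let φ : Matrix (Fin m) (Fin n) ℝ →L[ℝ] Matrix (Fin n) (Fin m) ℝ :=
    LinearMap.toContinuousLinearMap
      { toFun := fun M => Mᵀ * J
        map_add' := fun M N => by simp [Matrix.transpose_add, Matrix.add_mul]
        map_smul' := fun c M => by simp [Matrix.transpose_smul, Matrix.smul_mul] }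
  have hφ : ∀ M : Matrix (Fin m) (Fin n) ℝ, φ M = Mᵀ * J := fun _ => rfl
  -- ψ M = Mᵀ *ᵥ (J *ᵥ b)
  let ψ : Matrix (Fin m) (Fin n) ℝ →L[ℝ] (Fin n → ℝ) :=
    LinearMap.toContinuousLinearMap
      { toFun := fun M => Mᵀ *ᵥ (J *ᵥ b)
        map_add' := fun M N => by simp [Matrix.transpose_add, Matrix.add_mul, Matrix.add_mulVec]
        map_smul' := fun c M => by simp [Matrix.transpose_smul, Matrix.smul_mul, Matrix.smul_mulVec] }
  have hψ : ∀ M : Matrix (Fin m) (Fin n) ℝ, ψ M = Mᵀ *ᵥ (J *ᵥ b) := fun _ => rfl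
  -- g M = Mᵀ * J * M
  have hg : HasFDerivAt (fun M : Matrix (Fin m) (Fin n) ℝ => Mᵀ * J * M)
      (((mulCLM n m n).comp φ) A ∘L (ContinuousLinearMap.id ℝ _)
        + (id (((mulCLM n m n).comp φ).flip A) : Matrix (Fin m) (Fin n) ℝ →L[ℝ] Matrix (Fin n) (Fin n) ℝ)) A := by
    have := HasFDerivAt.clm_apply (c := fun M => ((mulCLM n m n).comp φ) M)
      (u := fun M : Matrix (Fin m) (Fin n) ℝ => M)
      (((mulCLM n m n).comp φ).hasFDerivAt) (hasFDerivAt_id A)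
    exact this
  set g' := (((mulCLM n m n).comp φ) A ∘L (ContinuousLinearMap.id ℝ _)
        + (id (((mulCLM n m n).comp φ).flip A) : Matrix (Fin m) (Fin n) ℝ →L[ℝ] Matrix (Fin n) (Fin n) ℝ)) with hg'def
  -- inverse step
  have hinv0 : HasFDerivAt (Ring.inverse : Matrix (Fin n) (Fin n) ℝ → _)
      (-(ContinuousLinearMap.mulLeftRight ℝ _ S⁻¹ S⁻¹)) S := by
    have h1 := hasFDerivAt_ringInverse (𝕜 := ℝ) hS.unit
    have h2 : ((hS.unit)⁻¹ : (Matrix (Fin n) (Fin n) ℝ)ˣ) = (S⁻¹ : Matrix (Fin n) (Fin n) ℝ) := by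
      rw [Matrix.coe_units_inv, hS.unit_spec]
    rw [hS.unit_spec, h2] at h1
    exact h1
  have hh : HasFDerivAt (fun M : Matrix (Fin m) (Fin n) ℝ => (Mᵀ * J * M)⁻¹)
      ((-(ContinuousLinearMap.mulLeftRight ℝ _ S⁻¹ S⁻¹)).comp g') A := by
    have : (fun M : Matrix (Fin m) (Fin n) ℝ => (Mᵀ * J * M)⁻¹)
        = (fun X : Matrix (Fin n) (Fin n) ℝ => Ring.inverse X) ∘
          (fun M : Matrix (Fin m) (Fin n) ℝ => Mᵀ * J * M) := by
      funext M; simp [Function.comp, Matrix.nonsing_inv_eq_ringInverse]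
    rw [this]
    exact hinv0.comp A hg
  set h' := ((-(ContinuousLinearMap.mulLeftRight ℝ _ S⁻¹ S⁻¹)).comp g') with hh'def
  -- full map F M = (Mᵀ J M)⁻¹ *ᵥ (Mᵀ *ᵥ (J *ᵥ b))
  have hC : HasFDerivAt (fun M : Matrix (Fin m) (Fin n) ℝ => mulVecCLM n n ((Mᵀ * J * M)⁻¹))
      ((mulVecCLM n n).comp h') A := (mulVecCLM n n).hasFDerivAt.comp A hh
  have hF := hC.clm_apply ψ.hasFDerivAt
  set D := ((mulVecCLM n n ((Aᵀ * J * A)⁻¹)).comp ψ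
      + (id (((mulVecCLM n n).comp h').flip (ψ A)) : Matrix (Fin m) (Fin n) ℝ →L[ℝ] Fin n → ℝ)) with hDdef
  -- pass to EuclideanSpace
  let e := (PiLp.continuousLinearEquiv 2 ℝ (fun _ : Fin n => ℝ)).symm
  refine ⟨(e : (Fin n → ℝ) →L[ℝ] EuclideanSpace ℝ (Fin n)).comp D, ?_, ?_⟩
  · have hF' : HasFDerivAt
        (fun M : Matrix (Fin m) (Fin n) ℝ => e (mulVecCLM n n ((Mᵀ * J * M)⁻¹) (ψ M)))
        ((e : (Fin n → ℝ) →L[ℝ] EuclideanSpace ℝ (Fin n)).comp D) A :=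
      (e : (Fin n → ℝ) →L[ℝ] EuclideanSpace ℝ (Fin n)).hasFDerivAt.comp A hF
    have heq : (fun M : Matrix (Fin m) (Fin n) ℝ =>
        ((WithLp.equiv 2 (Fin n → ℝ)).symm (ilsX M J b) : EuclideanSpace ℝ (Fin n)))
        = fun M : Matrix (Fin m) (Fin n) ℝ => e (mulVecCLM n n ((Mᵀ * J * M)⁻¹) (ψ M)) := by
      funext M
      have : ilsX M J b = (Mᵀ * J * M)⁻¹ *ᵥ (Mᵀ *ᵥ (J *ᵥ b)) := by
        simp [ilsX, Matrix.mulVec_mulVec, Matrix.mul_assoc]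
      rw [this]; rfl
    rw [heq]
    exact hF'
  · intro ΔA
    have : D ΔA = (Aᵀ * J * A)⁻¹ *ᵥ (ΔAᵀ *ᵥ (J *ᵥ ilsR A J b))
        - ((Aᵀ * J * A)⁻¹ * Aᵀ * J) *ᵥ (ΔA *ᵥ ilsX A J b) := by
      have hDA : D ΔA = S⁻¹ *ᵥ (ΔAᵀ *ᵥ (J *ᵥ b))
          + (-(S⁻¹ * (Aᵀ * J * ΔA + ΔAᵀ * J * A) * S⁻¹)) *ᵥ (Aᵀ *ᵥ (J *ᵥ b)) := by
        simp only [hDdef, hh'def, hg'def, ContinuousLinearMap.add_apply,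
          ContinuousLinearMap.comp_apply, ContinuousLinearMap.coe_comp', Function.comp,
          ContinuousLinearMap.flip_apply, ContinuousLinearMap.neg_apply,
          ContinuousLinearMap.mulLeftRight_apply, ContinuousLinearMap.id_apply,
          mulVecCLM_apply, mulCLM_apply, hψ, hφ, hSdef, id]
        rfl
      rw [hDA, key_ils]
      simp only [ilsR, ilsX, ← hSdef]
    rw [ContinuousLinearMap.comp_apply, this]
    rfl
end

section
/- With the ILS data and M₁, M₂ as in the context, there exists a real m×n matrix U with ‖U‖_F = 1 such that lim_{t→0⁺} ‖f(A + tU) − f(A)‖₂ / t = ‖M₁ − M₂‖₂, where f(M) = (MᵀJM)⁻¹MᵀJb. (That is, the coefficient ‖M₁ − M₂‖₂, the spectral norm of the Jacobian of f at A, is approximately attained by some direction of perturbation.) -/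
open Matrix

open Filter Topology

lemma eNorm_smul' {p : Type*} [Fintype p] (c : ℝ) (v : p → ℝ) :
    eNorm (c • v) = |c| * eNorm v := by
  unfold eNorm
  rw [← Real.sqrt_sq_eq_abs, ← Real.sqrt_mul (sq_nonneg c), Finset.mul_sum]
  exact congrArg Real.sqrt (Finset.sum_congr rfl fun i _ => by simp [mul_pow])

lemma eNorm_continuous {p : Type*} [Fintype p] : Continuous (eNorm (p := p)) := by
  unfold eNorm
  exact Real.continuous_sqrt.comp
    (continuous_finset_sum _ fun i _ => (continuous_apply i).pow 2)

lemma exists_norm_apply_eq {E F : Type*} [NormedAddCommGroup E] [NormedSpace ℝ E]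
    [NormedAddCommGroup F] [NormedSpace ℝ F] [FiniteDimensional ℝ E]
    (v₀ : E) (hv₀ : ‖v₀‖ = 1) (T : E →L[ℝ] F) :
    ∃ v : E, ‖v‖ = 1 ∧ ‖T v‖ = ‖T‖ := by
  have hc : IsCompact (Metric.sphere (0 : E) 1) := isCompact_sphere 0 1
  have hne : (Metric.sphere (0:E) 1).Nonempty := ⟨v₀, by simp [hv₀]⟩
  obtain ⟨v, hv, hmax⟩ := hc.exists_isMaxOn hne (T.continuous.norm.continuousOn)
  have hv1 : ‖v‖ = 1 := by simpa using hv
  refine ⟨v, hv1, le_antisymm (by simpa [hv1] using T.le_opNorm v) ?_⟩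
  refine T.opNorm_le_bound (norm_nonneg _) fun x => ?_
  rcases eq_or_ne x 0 with rfl | hx
  · simp
  · have hxn : ‖x‖ ≠ 0 := norm_ne_zero_iff.mpr hx
    have hu : ‖(‖x‖⁻¹ • x)‖ = 1 := by
      simp [norm_smul, abs_of_nonneg (norm_nonneg x), inv_mul_cancel₀ hxn]
    have := hmax (by simp [hu] : (‖x‖⁻¹ • x) ∈ Metric.sphere (0:E) 1)
    have h2 : ‖T (‖x‖⁻¹ • x)‖ ≤ ‖T v‖ := this
    rw [T.map_smul, norm_smul, norm_inv, norm_norm] at h2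
    calc ‖T x‖ = ‖x‖ * (‖x‖⁻¹ * ‖T x‖) := by field_simp
      _ ≤ ‖x‖ * ‖T v‖ := mul_le_mul_of_nonneg_left h2 (norm_nonneg x)
      _ = ‖T v‖ * ‖x‖ := mul_comm _ _

attribute [local instance] Matrix.linftyOpNormedRing Matrix.linftyOpNormedAlgebra
  Matrix.linftyOpNormedAddCommGroup

lemma key_deriv {n : ℕ} (S P Q : Matrix (Fin n) (Fin n) ℝ) (hS : IsUnit S)
    (c₀ c₁ : Fin n → ℝ) :
    HasDerivAt (fun t : ℝ =>
        (S + t • P + (t*t) • Q)⁻¹ *ᵥ c₀ + t • ((S + t • P + (t*t) • Q)⁻¹ *ᵥ c₁))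
      ((-(S⁻¹ * P * S⁻¹)) *ᵥ c₀ + S⁻¹ *ᵥ c₁) 0 := by
  set B : ℝ → Matrix (Fin n) (Fin n) ℝ := fun t => S + t • P + (t*t) • Q with hB
  have hB0 : B 0 = S := by simp [hB]
  have hBd : HasDerivAt B P 0 := by
    have h1 : HasDerivAt (fun t : ℝ => t • P) ((1:ℝ) • P) 0 :=
      (hasDerivAt_id (0:ℝ)).smul_const P
    have h2 : HasDerivAt (fun t : ℝ => (t*t) • Q) ((0:ℝ) • Q) 0 := by
      exact (((hasDerivAt_id (0:ℝ)).mul (hasDerivAt_id (0:ℝ))).smul_const Q).congr_deriv (by simp)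
    exact (((hasDerivAt_const (0:ℝ) S).add h1).add h2).congr_deriv (by simp)
  have hDinv : HasDerivAt (fun t => (B t)⁻¹) (-(S⁻¹ * P * S⁻¹)) 0 := by
    have hf : HasFDerivAt Ring.inverse
        (-(ContinuousLinearMap.mulLeftRight ℝ _ (↑hS.unit⁻¹) (↑hS.unit⁻¹))) (B 0) := by
      rw [hB0]
      simpa [hS.unit_spec] using hasFDerivAt_ringInverse hS.unit
    have h2 := hf.comp_hasDerivAt 0 hBd
    have he : (Ring.inverse ∘ B) = fun t => (B t)⁻¹ := by
      funext t; simp only [Function.comp_apply, Matrix.nonsing_inv_eq_ringInverse]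
    rw [he] at h2
    refine h2.congr_deriv ?_
    simp only [ContinuousLinearMap.neg_apply, ContinuousLinearMap.mulLeftRight_apply]
    rw [Matrix.coe_units_inv, hS.unit_spec, Matrix.mul_assoc]
  have hCLM : ∀ c : Fin n → ℝ, ∃ L : Matrix (Fin n) (Fin n) ℝ →L[ℝ] (Fin n → ℝ),
      ∀ M, L M = M *ᵥ c := by
    intro c
    refine ⟨LinearMap.toContinuousLinearMap
      { toFun := fun M => M *ᵥ c
        map_add' := fun M N => Matrix.add_mulVec M N c
        map_smul' := fun r M => Matrix.smul_mulVec r M c }, fun M => rfl⟩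
  obtain ⟨L₀, hL₀⟩ := hCLM c₀
  obtain ⟨L₁, hL₁⟩ := hCLM c₁
  have hF : HasDerivAt (fun t => (B t)⁻¹ *ᵥ c₀) ((-(S⁻¹ * P * S⁻¹)) *ᵥ c₀) 0 := by
    have := L₀.hasFDerivAt.comp_hasDerivAt 0 hDinv
    simp only [Function.comp_def, hL₀] at this
    exact this.congr_deriv (hL₀ _)
  have hG : HasDerivAt (fun t => (B t)⁻¹ *ᵥ c₁) ((-(S⁻¹ * P * S⁻¹)) *ᵥ c₁) 0 := by
    have := L₁.hasFDerivAt.comp_hasDerivAt 0 hDinv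
    simp only [Function.comp_def, hL₁] at this
    exact this.congr_deriv (hL₁ _)
  have htG : HasDerivAt (fun t : ℝ => t • ((B t)⁻¹ *ᵥ c₁))
      ((0:ℝ) • ((-(S⁻¹ * P * S⁻¹)) *ᵥ c₁) + (1:ℝ) • ((B 0)⁻¹ *ᵥ c₁)) 0 :=
    (hasDerivAt_id (0:ℝ)).smul hG
  have := hF.add htG
  exact this.congr_deriv (by simp [hB0])

/-- The spectral norm of the Jacobian is attained: there is a unit-Frobenius-norm
direction `U` with `lim_{t→0⁺} ‖f(A+tU) − f(A)‖₂ / t = ‖M₁ − M₂‖₂`. -/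
theorem stmt_8 (m n : ℕ) (hmn : m > n) (hn : n ≥ 1)
    (A : Matrix (Fin m) (Fin n) ℝ) (b : Fin m → ℝ)
    (d : Fin m → ℝ) (hd : ∀ i, d i = 1 ∨ d i = -1)
    (J : Matrix (Fin m) (Fin m) ℝ) (hJ : J = Matrix.diagonal d)
    (hpd : (Aᵀ * J * A).PosDef) :
    ∃ U : Matrix (Fin m) (Fin n) ℝ, frobNorm U = 1 ∧
      Tendsto (fun t : ℝ => eNorm (ilsX (A + t • U) J b - ilsX A J b) / t)
        (𝓝[>] 0) (𝓝 (specNorm (ilsM1 A J b - ilsM2 A J b))) := by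
  classical
  set S := Aᵀ * J * A with hSdef
  have hS : IsUnit S := hpd.isUnit
  set Msub := ilsM1 A J b - ilsM2 A J b with hMdef
  set T := LinearMap.toContinuousLinearMap (Matrix.toEuclideanLin Msub) with hTdef
  have hm : 0 < m := lt_trans (by omega) hmn
  have hn' : 0 < n := hn
  set p₀ : Fin n × Fin m := (⟨0, hn'⟩, ⟨0, hm⟩) with hp₀
  have hv₀ : ‖(EuclideanSpace.single p₀ (1:ℝ) : EuclideanSpace ℝ (Fin n × Fin m))‖ = 1 := by
    simp [EuclideanSpace.norm_single]
  obtain ⟨v, hv1, hvT⟩ := exists_norm_apply_eq _ hv₀ T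
  set U : Matrix (Fin m) (Fin n) ℝ := Matrix.of fun k j => v (j, k) with hUdef
  have hU : ∀ (j : Fin n) (k : Fin m), v (j, k) = U k j := fun _ _ => rfl
  refine ⟨U, ?_, ?_⟩
  · -- Frobenius norm is 1
    have : frobNorm U = ‖v‖ := by
      rw [EuclideanSpace.norm_eq]
      unfold frobNorm
      congr 1
      rw [← Fintype.sum_prod_type']
      exact Fintype.sum_equiv (Equiv.prodComm (Fin m) (Fin n)) _ _
        (fun kj => by simp [hUdef, Real.norm_eq_abs, sq_abs, Prod.swap])
    rw [this, hv1]
  · -- the limit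
    set P : Matrix (Fin n) (Fin n) ℝ := Uᵀ * J * A + Aᵀ * J * U with hPdef
    set Q : Matrix (Fin n) (Fin n) ℝ := Uᵀ * J * U with hQdef
    set c₀ : Fin n → ℝ := (Aᵀ * J) *ᵥ b with hc₀
    set c₁ : Fin n → ℝ := (Uᵀ * J) *ᵥ b with hc₁
    set g : ℝ → (Fin n → ℝ) := fun t =>
      (S + t • P + (t*t) • Q)⁻¹ *ᵥ c₀ + t • ((S + t • P + (t*t) • Q)⁻¹ *ᵥ c₁) with hgdef
    have hgeq : ∀ t : ℝ, ilsX (A + t • U) J b = g t := by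
      intro t
      have hBt : (A + t • U)ᵀ * J * (A + t • U) = S + t • P + (t*t) • Q := by
        simp only [Matrix.transpose_add, Matrix.transpose_smul, Matrix.add_mul,
          Matrix.mul_add, Matrix.smul_mul, Matrix.mul_smul, hSdef, hPdef, hQdef,
          smul_smul, smul_add]
        try abel
      have hMt : (A + t • U)ᵀ * J = Aᵀ * J + t • (Uᵀ * J) := by
        simp [Matrix.transpose_add, Matrix.transpose_smul, Matrix.add_mul, Matrix.smul_mul]
      unfold ilsX
      rw [hBt, Matrix.mul_assoc, hMt, ← Matrix.mulVec_mulVec]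
      rw [Matrix.add_mulVec, Matrix.smul_mulVec, ← hc₀, ← hc₁]
      rw [Matrix.mulVec_add, Matrix.mulVec_smul]
    set w : Fin n → ℝ := (-(S⁻¹ * P * S⁻¹)) *ᵥ c₀ + S⁻¹ *ᵥ c₁ with hwdef
    have hg : HasDerivAt g w 0 := key_deriv S P Q hS c₀ c₁
    set x := ilsX A J b with hxdef
    set r' := J *ᵥ ilsR A J b with hr'def
    have hx : S⁻¹ *ᵥ c₀ = x := by
      rw [hxdef]; unfold ilsX
      rw [Matrix.mul_assoc, ← Matrix.mulVec_mulVec, hc₀, hSdef]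
    have hw' : w = S⁻¹ *ᵥ (Uᵀ *ᵥ r') - (S⁻¹ * Aᵀ * J) *ᵥ (U *ᵥ x) := by
      rw [hwdef, Matrix.neg_mulVec]
      have h1 : (S⁻¹ * P * S⁻¹) *ᵥ c₀ = S⁻¹ *ᵥ (P *ᵥ x) := by
        rw [← hx, ← Matrix.mulVec_mulVec, ← Matrix.mulVec_mulVec]
      have h2 : Uᵀ *ᵥ r' = c₁ - (Uᵀ * J * A) *ᵥ x := by
        rw [hr'def]; unfold ilsR
        rw [← hxdef, Matrix.mulVec_sub, Matrix.mulVec_sub, hc₁]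
        rw [Matrix.mulVec_mulVec, Matrix.mulVec_mulVec, Matrix.mulVec_mulVec,
          Matrix.mul_assoc]
      have h3 : S⁻¹ *ᵥ ((Aᵀ * J * U) *ᵥ x) = (S⁻¹ * Aᵀ * J) *ᵥ (U *ᵥ x) := by
        simp only [Matrix.mulVec_mulVec, Matrix.mul_assoc]
      rw [h1, hPdef, Matrix.add_mulVec, Matrix.mulVec_add, h2, Matrix.mulVec_sub, h3]
      abel
    have hMv : ∀ i, Matrix.toEuclideanLin Msub v i = w i := by
      intro i
      have hlhs : Matrix.toEuclideanLin Msub v i = ∑ pr : Fin n × Fin m, Msub i pr * v pr := rfl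
      rw [hlhs, hw']
      simp only [hMdef, Matrix.sub_apply, ilsM1, ilsM2, Matrix.of_apply, ← hr'def,
        ← hxdef, ← hSdef]
      rw [Fintype.sum_prod_type]
      have hrhs : (S⁻¹ *ᵥ (Uᵀ *ᵥ r') - (S⁻¹ * Aᵀ * J) *ᵥ (U *ᵥ x)) i
          = ∑ j, S⁻¹ i j * (∑ k, U k j * r' k)
            - ∑ k, (S⁻¹ * Aᵀ * J) i k * (∑ j, U k j * x j) := by
        simp only [Pi.sub_apply, Matrix.mulVec, dotProduct, Matrix.transpose_apply]
      rw [hrhs]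
      simp only [sub_mul, Finset.sum_sub_distrib]
      congr 1
      · refine Finset.sum_congr rfl fun j _ => ?_
        rw [Finset.mul_sum]
        refine Finset.sum_congr rfl fun k _ => ?_
        rw [hU j k]; ring
      · rw [Finset.sum_comm]
        refine Finset.sum_congr rfl fun k _ => ?_
        rw [Finset.mul_sum]
        refine Finset.sum_congr rfl fun j _ => ?_
        rw [hU j k]; ring
    have hTv : ‖T v‖ = eNorm w := by
      have hTv' : ∀ i, T v i = w i := by
        intro i
        rw [hTdef, LinearMap.coe_toContinuousLinearMap']
        exact hMv i
      rw [EuclideanSpace.norm_eq]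
      unfold eNorm
      congr 1
      refine Finset.sum_congr rfl fun i _ => ?_
      rw [hTv' i, Real.norm_eq_abs, sq_abs]
    have hval : specNorm Msub = eNorm w := by
      unfold specNorm; rw [← hTdef, ← hvT, hTv]
    rw [hval]
    -- limit of slopes
    have hslope : Tendsto (slope g 0) (𝓝[≠] (0:ℝ)) (𝓝 w) :=
      hasDerivAt_iff_tendsto_slope.mp hg
    have h1 : Tendsto (slope g 0) (𝓝[>] (0:ℝ)) (𝓝 w) :=
      hslope.mono_left (nhdsWithin_mono _ fun t ht => ne_of_gt ht)
    have h2 : Tendsto (fun t => eNorm (slope g 0 t)) (𝓝[>] (0:ℝ)) (𝓝 (eNorm w)) :=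
      (eNorm_continuous.tendsto w).comp h1
    have hg0 : ilsX A J b = g 0 := by
      have := hgeq 0
      simpa using this
    refine Tendsto.congr' ?_ h2
    filter_upwards [self_mem_nhdsWithin] with t ht
    have ht' : (0:ℝ) < t := ht
    rw [slope_def_module]
    simp only [sub_zero]
    rw [eNorm_smul', abs_inv, abs_of_pos ht', div_eq_inv_mul, hxdef, hg0, hgeq t]
end

section
/- For 0 < α < π/4, set θ = π/4 − α, and consider the ILS problem with A the 2×1 matrix (cos θ, sin θ)ᵀ, b = (1, 1)ᵀ, and J = diag(1, −1). Then AᵀJA = cos(2θ) > 0, the solution is the scalar x = 1/(cos θ + sin θ), and the spectral norm of the Jacobian matrix of the solution with respect to A satisfies ‖M₁ − M₂‖₂ = 2^{-1/2}·sec²(α); consequently the condition number χ = (‖A‖_F/‖x‖₂)·‖M₁ − M₂‖₂ equals sec(α). -/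
open Matrix

/-- The 2×1 example matrix `A = (cos θ, sin θ)ᵀ`. -/
noncomputable def exA (θ : ℝ) : Matrix (Fin 2) (Fin 1) ℝ := !![Real.cos θ; Real.sin θ]

/-- The signature matrix `J = diag(1, −1)`. -/
noncomputable def exJ : Matrix (Fin 2) (Fin 2) ℝ := !![1, 0; 0, -1]

/-- The right-hand side `b = (1, 1)ᵀ`. -/
noncomputable def exb : Fin 2 → ℝ := ![1, 1]

lemma specNorm_one_row {q : Type*} [Fintype q] [DecidableEq q] (M : Matrix (Fin 1) q ℝ) :
    specNorm M = eNorm (M 0) := by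
  set u : EuclideanSpace ℝ q := (WithLp.equiv 2 (q → ℝ)).symm (M 0) with hu
  have hnorm : eNorm (M 0) = ‖u‖ := by
    rw [EuclideanSpace.norm_eq, eNorm]
    congr 1
    exact Finset.sum_congr rfl fun i _ => by simp [hu, sq_abs, sq, WithLp.equiv_symm_apply, PiLp.toLp_apply]
  have key : ∀ v : EuclideanSpace ℝ q,
      (LinearMap.toContinuousLinearMap (Matrix.toEuclideanLin M)) v
        = (WithLp.toLp 2 (fun _ : Fin 1 => (inner ℝ u v : ℝ)) : EuclideanSpace ℝ (Fin 1)) := by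
    intro v
    ext i
    simp only [LinearMap.coe_toContinuousLinearMap', Matrix.toEuclideanLin_apply]
    simp [Matrix.mulVec, dotProduct, PiLp.inner_apply, hu,
      WithLp.equiv_symm_apply, PiLp.toLp_apply, Fin.fin_one_eq_zero i, mul_comm]
  have hnv : ∀ v : EuclideanSpace ℝ q,
      ‖(LinearMap.toContinuousLinearMap (Matrix.toEuclideanLin M)) v‖ = |(inner ℝ u v : ℝ)| := by
    intro v
    rw [key v, EuclideanSpace.norm_eq]
    simp [sq_abs, Real.sqrt_sq_eq_abs]
  rw [specNorm, hnorm]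
  apply le_antisymm
  · apply ContinuousLinearMap.opNorm_le_bound _ (norm_nonneg u)
    intro v
    rw [hnv v]
    exact abs_real_inner_le_norm u v
  · rcases eq_or_ne u 0 with h | h
    · simp [h]
    · have h1 : ‖(LinearMap.toContinuousLinearMap (Matrix.toEuclideanLin M)) u‖
          ≤ ‖LinearMap.toContinuousLinearMap (Matrix.toEuclideanLin M)‖ * ‖u‖ :=
        ContinuousLinearMap.le_opNorm _ u
      rw [hnv u, real_inner_self_eq_norm_mul_norm, abs_of_nonneg (by positivity)] at h1
      have hu0 : 0 < ‖u‖ := norm_pos_iff.mpr h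
      nlinarith

lemma inv_fin_one (a : ℝ) : (!![a] : Matrix (Fin 1) (Fin 1) ℝ)⁻¹ = !![a⁻¹] := by
  rw [Matrix.inv_def, Matrix.adjugate_fin_one, Matrix.det_fin_one_of, Ring.inverse_eq_inv]
  ext i j
  fin_cases i; fin_cases j; simp

set_option maxHeartbeats 1000000 in
/-- First example of the paper: for `θ = π/4 − α`, `AᵀJA = cos 2θ > 0`,
`x = 1/(cos θ + sin θ)`, `‖M₁ − M₂‖₂ = 2^{-1/2} sec² α`, and the condition
number `χ = (‖A‖_F/‖x‖₂)·‖M₁ − M₂‖₂` equals `sec α`. -/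
theorem stmt_13 (α θ : ℝ) (hα : 0 < α) (hα' : α < Real.pi / 4)
    (hθ : θ = Real.pi / 4 - α) :
    (exA θ)ᵀ * exJ * exA θ = !![Real.cos (2 * θ)] ∧
    0 < Real.cos (2 * θ) ∧
    ilsX (exA θ) exJ exb = ![1 / (Real.cos θ + Real.sin θ)] ∧
    specNorm (ilsM1 (exA θ) exJ exb - ilsM2 (exA θ) exJ exb)
      = (Real.sqrt 2)⁻¹ * ((Real.cos α) ^ 2)⁻¹ ∧
    (frobNorm (exA θ) / eNorm (ilsX (exA θ) exJ exb))
        * specNorm (ilsM1 (exA θ) exJ exb - ilsM2 (exA θ) exJ exb)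
      = (Real.cos α)⁻¹ := by
  set c := Real.cos θ with hc
  set s := Real.sin θ with hs
  have hpyth : s ^ 2 + c ^ 2 = 1 := Real.sin_sq_add_cos_sq θ
  have hpi := Real.pi_pos
  have h1 : (exA θ)ᵀ * exJ * exA θ = !![Real.cos (2 * θ)] := by
    ext i j
    fin_cases i; fin_cases j
    simp [exA, exJ, Matrix.mul_apply, Fin.sum_univ_two, Matrix.transpose_apply,
      Matrix.vecHead, Matrix.vecTail, Real.cos_two_mul]
    nlinarith
  have h2θ : 2 * θ = Real.pi / 2 - 2 * α := by rw [hθ]; ring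
  have h2 : 0 < Real.cos (2 * θ) := by
    rw [h2θ, Real.cos_pi_div_two_sub]
    exact Real.sin_pos_of_pos_of_lt_pi (by linarith) (by linarith)
  have hd : Real.cos (2 * θ) = (c - s) * (c + s) := by
    rw [Real.cos_two_mul]; nlinarith
  have hθ1 : 0 < θ := by rw [hθ]; linarith
  have hθ2 : θ < Real.pi := by rw [hθ]; linarith
  have hspos : 0 < s := Real.sin_pos_of_pos_of_lt_pi hθ1 hθ2
  have hcpos : 0 < c := Real.cos_pos_of_mem_Ioo ⟨by linarith [hθ1], by rw [hθ]; linarith⟩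
  have hcs : 0 < c + s := by linarith
  have hcms : 0 < c - s := by
    rcases lt_trichotomy (c - s) 0 with h | h | h
    · nlinarith
    · nlinarith
    · exact h
  have hcsne : c + s ≠ 0 := ne_of_gt hcs
  have hcmsne : c - s ≠ 0 := ne_of_gt hcms
  have hdne : Real.cos (2 * θ) ≠ 0 := ne_of_gt h2
  have hca : 0 < Real.cos α :=
    Real.cos_pos_of_mem_Ioo ⟨by linarith, by linarith⟩
  have h2sq : (Real.sqrt 2) ^ 2 = 2 := Real.sq_sqrt (by norm_num)
  have hs2pos : (0:ℝ) < Real.sqrt 2 := by positivity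
  have hsum : (c + s) ^ 2 = 2 * Real.cos α ^ 2 := by
    have hsin2 : Real.sin (2 * θ) = Real.cos (2 * α) := by
      rw [h2θ, Real.sin_pi_div_two_sub]
    have h3 := Real.sin_two_mul θ
    have h4 := Real.cos_two_mul α
    nlinarith
  have hcs2 : c + s = Real.sqrt 2 * Real.cos α := by
    have e1 : c + s = Real.sqrt ((c + s) ^ 2) := (Real.sqrt_sq hcs.le).symm
    rw [e1, hsum, show (2 : ℝ) * Real.cos α ^ 2 = (Real.sqrt 2 * Real.cos α) ^ 2 by
      rw [mul_pow, h2sq], Real.sqrt_sq (by positivity)]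
  have hinv : ((exA θ)ᵀ * exJ * exA θ)⁻¹ = !![(Real.cos (2 * θ))⁻¹] := by
    rw [h1, inv_fin_one]
  have hB : ((exA θ)ᵀ * exJ * exA θ)⁻¹ * (exA θ)ᵀ * exJ
      = !![c / Real.cos (2 * θ), -(s / Real.cos (2 * θ))] := by
    rw [Matrix.mul_assoc, hinv]
    ext i j
    fin_cases i; fin_cases j <;>
      simp [exA, exJ, Matrix.mul_apply, Fin.sum_univ_two, Fin.sum_univ_one,
        Matrix.transpose_apply, Matrix.vecHead, Matrix.vecTail, div_eq_inv_mul] <;>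
        exact Or.inl rfl
  have hX : ilsX (exA θ) exJ exb = ![1 / (c + s)] := by
    rw [ilsX, hB]
    ext i
    fin_cases i
    simp [exb, Matrix.mulVec, dotProduct, Fin.sum_univ_two,
      Matrix.vecHead, Matrix.vecTail]
    rw [hd]
    field_simp
    try ring
    try (left; trivial)
  have hR : ilsR (exA θ) exJ exb = ![s / (c + s), c / (c + s)] := by
    rw [ilsR, hX]
    ext i
    fin_cases i <;>
    · simp [exA, exb, Matrix.mulVec, dotProduct, Fin.sum_univ_one,
        Matrix.vecHead, Matrix.vecTail]
      field_simp
      try ring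
      try (left; trivial)
  have hJr : exJ *ᵥ ilsR (exA θ) exJ exb = ![s / (c + s), -(c / (c + s))] := by
    rw [hR]
    ext i
    fin_cases i <;>
      simp [exJ, Matrix.mulVec, dotProduct, Fin.sum_univ_two,
        Matrix.vecHead, Matrix.vecTail]
  have ht : (s - c) / ((c + s) * ((c - s) * (c + s))) = -((c + s) ^ 2)⁻¹ := by
    field_simp
    ring
  have hdiff : ilsM1 (exA θ) exJ exb - ilsM2 (exA θ) exJ exb
      = Matrix.of (fun _ : Fin 1 => fun _ : Fin 1 × Fin 2 => (s - c) / ((c + s) * ((c - s) * (c + s)))) := by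
    ext i jk
    fin_cases i
    rw [Matrix.sub_apply]
    simp only [ilsM1, ilsM2, Matrix.of_apply]
    rw [hB, hinv, hJr, hX]
    fin_cases jk <;>
    · simp [Matrix.vecHead, Matrix.vecTail]
      rw [hd]
      field_simp
      try ring
      try (left; trivial)
  have hspec : specNorm (ilsM1 (exA θ) exJ exb - ilsM2 (exA θ) exJ exb)
      = (Real.sqrt 2)⁻¹ * ((Real.cos α) ^ 2)⁻¹ := by
    rw [hdiff, specNorm_one_row]
    have hval : eNorm (Matrix.of (fun _ : Fin 1 => fun _ : Fin 1 × Fin 2 => (s - c) / ((c + s) * ((c - s) * (c + s)))) 0)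
        = Real.sqrt ((-((c + s) ^ 2)⁻¹) ^ 2 + (-((c + s) ^ 2)⁻¹) ^ 2) := by
      rw [eNorm]
      congr 1
      rw [Fintype.sum_prod_type, Fin.sum_univ_one, Fin.sum_univ_two]
      simp [ht]
    rw [hval]
    have heq : (-((c + s) ^ 2)⁻¹) ^ 2 + (-((c + s) ^ 2)⁻¹) ^ 2
        = ((Real.sqrt 2)⁻¹ * ((Real.cos α) ^ 2)⁻¹) ^ 2 := by
      field_simp
      rw [show (c + s) ^ 4 = ((c + s) ^ 2) ^ 2 by ring, hsum]
      nlinarith [h2sq, sq_nonneg (Real.cos α)]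
    rw [heq, Real.sqrt_sq (by positivity)]
  refine ⟨h1, h2, by rw [hX], hspec, ?_⟩
  have hF : frobNorm (exA θ) = 1 := by
    rw [frobNorm]
    rw [show (∑ i, ∑ j, (exA θ i j) ^ 2) = c ^ 2 + s ^ 2 by
      simp [exA, Fin.sum_univ_two, Fin.sum_univ_one, Matrix.vecHead, Matrix.vecTail]
      linarith]
    rw [show c ^ 2 + s ^ 2 = 1 by linarith, Real.sqrt_one]
  have hE : eNorm (ilsX (exA θ) exJ exb) = 1 / (c + s) := by
    rw [hX, eNorm, Fin.sum_univ_one]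
    simp only [Matrix.cons_val_zero]
    rw [Real.sqrt_sq (by positivity)]
  rw [hspec, hF, hE, hcs2]
  have hcane : Real.cos α ≠ 0 := ne_of_gt hca
  have hs2ne : Real.sqrt 2 ≠ 0 := ne_of_gt hs2pos
  field_simp
end

section
/- For 0 < α ≤ π/4, consider the ILS problem with the 3×2 matrix A(α) whose entries are A₁₁ = cos(π/4 − α), A₁₂ = 0, A₂₁ = 0, A₂₂ = 1/α, A₃₁ = sin(π/4 − α), A₃₂ = 0, with b = (1, 1, 1)ᵀ and J = diag(1, 1, −1). Then A(α)ᵀJA(α) = diag(sin(2α), α⁻²) is positive definite, the solution is x(α) = (1/(√2 cos α), α), and the residual r(α) = b − A(α)x(α) satisfies lim_{α→0⁺} ‖x(α)‖₂ = 2^{-1/2} and lim_{α→0⁺} ‖r(α)‖₂ = 2^{-1/2}; moreover lim_{α→0⁺} α·‖(A(α)ᵀJA(α))⁻¹‖₂ = 1/2 and lim_{α→0⁺} α·‖(A(α)ᵀJA(α))⁻¹A(α)ᵀ‖₂ = 1/2. -/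
open Matrix

/-- The 3×2 example matrix of the paper's second example. -/
noncomputable def exA3 (α : ℝ) : Matrix (Fin 3) (Fin 2) ℝ :=
  !![Real.cos (Real.pi / 4 - α), 0;
     0, α⁻¹;
     Real.sin (Real.pi / 4 - α), 0]

/-- The signature matrix `J = diag(1, 1, −1)`. -/
noncomputable def exJ3 : Matrix (Fin 3) (Fin 3) ℝ := !![1, 0, 0; 0, 1, 0; 0, 0, -1]

/-- The right-hand side `b = (1, 1, 1)ᵀ`. -/
noncomputable def exb3 : Fin 3 → ℝ := ![1, 1, 1]

section Aux
open Real Filter Topology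

lemma eNorm_eq_norm {p : Type*} [Fintype p] (v : p → ℝ) :
    eNorm v = ‖(WithLp.equiv 2 (p → ℝ)).symm v‖ := by
  rw [EuclideanSpace.norm_eq]
  simp [eNorm, sq_abs]

lemma eNorm_mulVec_le {p q : Type*} [Fintype p] [Fintype q] [DecidableEq q]
    (M : Matrix p q ℝ) (v : q → ℝ) :
    eNorm (M *ᵥ v) ≤ specNorm M * eNorm v := by
  rw [eNorm_eq_norm, eNorm_eq_norm, WithLp.equiv_symm_apply, WithLp.equiv_symm_apply, ← Matrix.toEuclideanLin_apply_piLp_toLp]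
  exact (LinearMap.toContinuousLinearMap (Matrix.toEuclideanLin M)).le_opNorm _

lemma eNorm_mulVec_le_frob {p q : Type*} [Fintype p] [Fintype q]
    (M : Matrix p q ℝ) (v : q → ℝ) :
    eNorm (M *ᵥ v) ≤ frobNorm M * eNorm v := by
  rw [eNorm, eNorm, frobNorm, ← Real.sqrt_mul (by positivity)]
  apply Real.sqrt_le_sqrt
  rw [Finset.sum_mul]
  apply Finset.sum_le_sum
  intro i _
  calc (M *ᵥ v) i ^ 2 = (∑ j, M i j * v j) ^ 2 := by rfl
    _ ≤ (∑ j, (M i j)^2) * (∑ j, (v j)^2) :=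
        Finset.sum_mul_sq_le_sq_mul_sq Finset.univ _ _

lemma specNorm_le_frob {p q : Type*} [Fintype p] [Fintype q] [DecidableEq q]
    (M : Matrix p q ℝ) : specNorm M ≤ frobNorm M := by
  apply ContinuousLinearMap.opNorm_le_bound _ (Real.sqrt_nonneg _)
  intro w
  have h := eNorm_mulVec_le_frob M ((WithLp.equiv 2 (q → ℝ)) w)
  rw [eNorm_eq_norm, eNorm_eq_norm] at h
  simpa [Matrix.toEuclideanLin_apply, frobNorm] using h

lemma exh (α : ℝ) : Real.cos (π/4-α)^2 - Real.sin (π/4-α)^2 = Real.sin (2*α) := by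
  have h1 := Real.cos_two_mul (π/4-α)
  have h2 := Real.sin_sq_add_cos_sq (π/4-α)
  have h3 : Real.cos (2*(π/4-α)) = Real.sin (2*α) := by
    rw [show 2*(π/4-α) = π/2 - 2*α by ring, Real.cos_pi_div_two_sub]
  nlinarith [h1, h2, h3]

lemma exATJA (α : ℝ) :
    (exA3 α)ᵀ * exJ3 * exA3 α = Matrix.diagonal ![Real.sin (2 * α), (α⁻¹) ^ 2] := by
  have h := exh α
  ext i j
  fin_cases i <;> fin_cases j <;>
    simp [exA3, exJ3, Matrix.mul_apply, Fin.sum_univ_succ, Matrix.diagonal] <;>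
    first
    | nlinarith [h]
    | rw [pow_two, mul_inv]

lemma exInv (α : ℝ) (hs : Real.sin (2 * α) ≠ 0) (ha : α ≠ 0) :
    ((exA3 α)ᵀ * exJ3 * exA3 α)⁻¹ = Matrix.diagonal ![(Real.sin (2 * α))⁻¹, α ^ 2] := by
  apply Matrix.inv_eq_right_inv
  rw [exATJA, Matrix.diagonal_mul_diagonal]
  ext i j
  rcases eq_or_ne i j with rfl | h
  · fin_cases i <;> simp [Matrix.one_apply] <;> field_simp
  · simp [Matrix.diagonal_apply_ne _ h, Matrix.one_apply_ne h]

lemma sin2_pos {α : ℝ} (h0 : 0 < α) (h2 : α < π/2) : 0 < Real.sin (2*α) :=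
  Real.sin_pos_of_pos_of_lt_pi (by linarith) (by linarith [Real.pi_pos])

lemma exX (α : ℝ) (h0 : 0 < α) (h2 : α < π/2) :
    ilsX (exA3 α) exJ3 exb3 = ![1 / (Real.sqrt 2 * Real.cos α), α] := by
  have hs : Real.sin (2*α) ≠ 0 := (sin2_pos h0 h2).ne'
  have hc : Real.cos α ≠ 0 := (Real.cos_pos_of_mem_Ioo ⟨by linarith, h2⟩).ne'
  have hsin : Real.sin α ≠ 0 := (Real.sin_pos_of_pos_of_lt_pi h0 (by linarith [Real.pi_pos])).ne'
  have hcos1 : Real.cos (π/4 - α) = Real.sqrt 2/2 * (Real.cos α + Real.sin α) := by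
    rw [Real.cos_sub, Real.cos_pi_div_four, Real.sin_pi_div_four]; ring
  have hsin1 : Real.sin (π/4 - α) = Real.sqrt 2/2 * (Real.cos α - Real.sin α) := by
    rw [Real.sin_sub, Real.cos_pi_div_four, Real.sin_pi_div_four]; ring
  have h2s : Real.sin (2*α) = 2 * Real.sin α * Real.cos α := Real.sin_two_mul α
  have hsq : Real.sqrt 2 ^ 2 = 2 := Real.sq_sqrt (by norm_num)
  have hs2 : Real.sqrt 2 ≠ 0 := by positivity
  unfold ilsX
  rw [exInv α hs h0.ne']
  funext i
  fin_cases i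
  · simp [Matrix.mulVec, Matrix.mul_apply, dotProduct, exA3, exJ3, exb3,
      Fin.sum_univ_succ, Matrix.diagonal, hcos1, hsin1, h2s]
    field_simp
    ring
    linear_combination (2 * Real.sin α) * hsq
  · simp [Matrix.mulVec, Matrix.mul_apply, dotProduct, exA3, exJ3, exb3,
      Fin.sum_univ_succ, Matrix.diagonal, hcos1, hsin1, h2s]
    field_simp

lemma exR (α : ℝ) (h0 : 0 < α) (h2 : α < π/2) :
    ilsR (exA3 α) exJ3 exb3 =
      ![(Real.cos α - Real.sin α)/(2*Real.cos α), 0,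
        (Real.cos α + Real.sin α)/(2*Real.cos α)] := by
  have hc : Real.cos α ≠ 0 := (Real.cos_pos_of_mem_Ioo ⟨by linarith, h2⟩).ne'
  have hcos1 : Real.cos (π/4 - α) = Real.sqrt 2/2 * (Real.cos α + Real.sin α) := by
    rw [Real.cos_sub, Real.cos_pi_div_four, Real.sin_pi_div_four]; ring
  have hsin1 : Real.sin (π/4 - α) = Real.sqrt 2/2 * (Real.cos α - Real.sin α) := by
    rw [Real.sin_sub, Real.cos_pi_div_four, Real.sin_pi_div_four]; ring
  have hsq : Real.sqrt 2 ^ 2 = 2 := Real.sq_sqrt (by norm_num)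
  have hs2 : Real.sqrt 2 ≠ 0 := by positivity
  unfold ilsR
  rw [exX α h0 h2]
  funext i
  fin_cases i
  · simp [exA3, exb3, Matrix.mulVec, dotProduct, Fin.sum_univ_succ, hcos1, hsin1]
    field_simp
    ring_nf
  · simp [exA3, exb3, Matrix.mulVec, dotProduct, Fin.sum_univ_succ, hcos1, hsin1]
    field_simp
    norm_num
  · simp [exA3, exb3, Matrix.mulVec, dotProduct, Fin.sum_univ_succ, hcos1, hsin1]
    field_simp
    ring_nf

lemma eNormX (α : ℝ) (h0 : 0 < α) (h2 : α < π/2) :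
    eNorm (ilsX (exA3 α) exJ3 exb3) = Real.sqrt ((2 * Real.cos α ^ 2)⁻¹ + α ^ 2) := by
  have hc : Real.cos α ≠ 0 := (Real.cos_pos_of_mem_Ioo ⟨by linarith, h2⟩).ne'
  have hsq : Real.sqrt 2 ^ 2 = 2 := Real.sq_sqrt (by norm_num)
  have hs2 : Real.sqrt 2 ≠ 0 := by positivity
  rw [exX α h0 h2]
  unfold eNorm
  congr 1
  simp [Fin.sum_univ_succ]
  field_simp
  ring_nf
  rw [hsq]

lemma eNormR (α : ℝ) (h0 : 0 < α) (h2 : α < π/2) :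
    eNorm (ilsR (exA3 α) exJ3 exb3) = Real.sqrt ((2 * Real.cos α ^ 2)⁻¹) := by
  have hc : Real.cos α ≠ 0 := (Real.cos_pos_of_mem_Ioo ⟨by linarith, h2⟩).ne'
  have hpy := Real.sin_sq_add_cos_sq α
  rw [exR α h0 h2]
  unfold eNorm
  congr 1
  simp [Fin.sum_univ_succ]
  field_simp
  ring_nf
  linear_combination 2 * hpy

lemma exPosDef (α : ℝ) (h0 : 0 < α) (h2 : α < π/2) :
    ((exA3 α)ᵀ * exJ3 * exA3 α).PosDef := by
  rw [exATJA, Matrix.posDef_diagonal_iff]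
  intro i
  fin_cases i
  · simpa using sin2_pos h0 h2
  · simp only [Matrix.cons_val_one, Matrix.head_cons]
    exact pow_pos (inv_pos.mpr h0) 2

lemma exM4 (α : ℝ) (h0 : 0 < α) (h2 : α < π/2) :
    ((exA3 α)ᵀ * exJ3 * exA3 α)⁻¹ * (exA3 α)ᵀ =
      !![Real.cos (π/4-α) * (Real.sin (2*α))⁻¹, 0, Real.sin (π/4-α) * (Real.sin (2*α))⁻¹;
         0, α, 0] := by
  have hs : Real.sin (2*α) ≠ 0 := (sin2_pos h0 h2).ne'
  rw [exInv α hs h0.ne']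
  ext i j
  fin_cases i <;> fin_cases j <;>
    simp [exA3, Matrix.mul_apply, Fin.sum_univ_succ, Matrix.diagonal,
      Matrix.transpose_apply, Matrix.vecHead, Matrix.vecTail] <;>
    field_simp <;> ring

lemma eNorm_pair (a b : ℝ) : eNorm ![a, b] = Real.sqrt (a^2 + b^2) := by
  unfold eNorm; congr 1; simp [Fin.sum_univ_succ]

lemma eNorm_triple (a b c : ℝ) : eNorm ![a, b, c] = Real.sqrt (a^2 + b^2 + c^2) := by
  unfold eNorm; congr 1; simp [Fin.sum_univ_succ]; ring

-- lower bound for the diagonal inverse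

lemma spec_lower3 (α : ℝ) (h0 : 0 < α) (h2 : α < π/2) :
    (Real.sin (2*α))⁻¹ ≤ specNorm (((exA3 α)ᵀ * exJ3 * exA3 α)⁻¹) := by
  have hs := sin2_pos h0 h2
  have h := eNorm_mulVec_le (((exA3 α)ᵀ * exJ3 * exA3 α)⁻¹) ![1, 0]
  rw [exInv α hs.ne' h0.ne'] at h ⊢
  have hv : (Matrix.diagonal ![(Real.sin (2*α))⁻¹, α^2]) *ᵥ ![1, 0]
      = ![(Real.sin (2*α))⁻¹, 0] := by
    funext i; fin_cases i <;>
      simp [Matrix.mulVec, dotProduct, Matrix.diagonal, Fin.sum_univ_succ]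
  rw [hv, eNorm_pair, eNorm_pair] at h
  norm_num at h
  rwa [Real.sqrt_sq hs.le] at h

lemma frob3 (α : ℝ) (h0 : 0 < α) (h2 : α < π/2) :
    frobNorm (((exA3 α)ᵀ * exJ3 * exA3 α)⁻¹)
      = Real.sqrt ((Real.sin (2*α))⁻¹^2 + α^4) := by
  have hs := sin2_pos h0 h2
  rw [exInv α hs.ne' h0.ne']
  unfold frobNorm
  congr 1
  simp [Fin.sum_univ_succ, Matrix.diagonal]
  ring

lemma spec_lower4 (α : ℝ) (h0 : 0 < α) (h2 : α < π/2) :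
    (Real.sin (2*α))⁻¹ ≤ specNorm (((exA3 α)ᵀ * exJ3 * exA3 α)⁻¹ * (exA3 α)ᵀ) := by
  have hs := sin2_pos h0 h2
  have hpy := Real.sin_sq_add_cos_sq (π/4 - α)
  have h := eNorm_mulVec_le (((exA3 α)ᵀ * exJ3 * exA3 α)⁻¹ * (exA3 α)ᵀ)
      ![Real.cos (π/4-α), 0, Real.sin (π/4-α)]
  rw [exM4 α h0 h2] at h
  have hv : (!![Real.cos (π/4-α) * (Real.sin (2*α))⁻¹, 0, Real.sin (π/4-α) * (Real.sin (2*α))⁻¹;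
         0, α, 0]) *ᵥ ![Real.cos (π/4-α), 0, Real.sin (π/4-α)]
      = ![(Real.sin (2*α))⁻¹, 0] := by
    funext i; fin_cases i <;>
      simp [Matrix.mulVec, dotProduct, Fin.sum_univ_succ] <;>
      linear_combination (Real.sin (2*α))⁻¹ * hpy
  rw [hv, eNorm_pair, eNorm_triple] at h
  have h1 : Real.cos (π/4-α)^2 + 0^2 + Real.sin (π/4-α)^2 = 1 := by linarith [hpy]
  rw [h1] at h
  norm_num at h
  rw [Real.sqrt_sq hs.le] at h
  rwa [exM4 α h0 h2]

lemma frob4 (α : ℝ) (h0 : 0 < α) (h2 : α < π/2) :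
    frobNorm (((exA3 α)ᵀ * exJ3 * exA3 α)⁻¹ * (exA3 α)ᵀ)
      = Real.sqrt ((Real.sin (2*α))⁻¹^2 + α^2) := by
  have hpy := Real.sin_sq_add_cos_sq (π/4 - α)
  rw [exM4 α h0 h2]
  unfold frobNorm
  congr 1
  simp [Fin.sum_univ_succ]
  linear_combination ((Real.sin (2*α))⁻¹^2) * hpy

lemma tendsto_sin_div : Tendsto (fun x : ℝ => Real.sin x / x) (𝓝[≠] (0:ℝ)) (𝓝 1) := by
  have h := hasDerivAt_iff_tendsto_slope.mp (Real.hasDerivAt_sin 0)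
  rw [Real.cos_zero] at h
  refine h.congr fun x => ?_
  simp [slope_def_field]

lemma tendsto_g : Tendsto (fun α : ℝ => α / Real.sin (2*α)) (𝓝[>] (0:ℝ)) (𝓝 (1/2)) := by
  have h2 : Tendsto (fun α : ℝ => 2*α) (𝓝[>] (0:ℝ)) (𝓝[≠] (0:ℝ)) := by
    apply tendsto_nhdsWithin_of_tendsto_nhds_of_eventually_within
    · have h : Tendsto (fun α : ℝ => 2*α) (𝓝 (0:ℝ)) (𝓝 (0:ℝ)) := by
        simpa using (continuous_mul_left (2:ℝ)).tendsto (0:ℝ)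
      exact h.mono_left nhdsWithin_le_nhds
    · filter_upwards [self_mem_nhdsWithin] with x hx
      simp only [Set.mem_compl_iff, Set.mem_singleton_iff]
      have : (0:ℝ) < x := hx
      exact (by positivity : (0:ℝ) < 2*x).ne'
  have h3 : Tendsto (fun α : ℝ => Real.sin (2*α) / (2*α)) (𝓝[>] (0:ℝ)) (𝓝 1) :=
    tendsto_sin_div.comp h2
  have h4 : Tendsto (fun α : ℝ => (2*α) / Real.sin (2*α)) (𝓝[>] (0:ℝ)) (𝓝 1) := by
    have := h3.inv₀ one_ne_zero
    norm_num at this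
    exact this
  have h5 := h4.const_mul (1/2 : ℝ)
  rw [mul_one] at h5
  refine h5.congr fun x => ?_
  ring

lemma sqrt_lim_aux : Real.sqrt ((1/2:ℝ)^2 + 0) = 1/2 := by
  rw [add_zero, Real.sqrt_sq]; norm_num

lemma tendsto_spec3 :
    Tendsto (fun α : ℝ => α * specNorm (((exA3 α)ᵀ * exJ3 * exA3 α)⁻¹))
      (𝓝[>] (0:ℝ)) (𝓝 (1/2)) := by
  have hio : Set.Ioo (0:ℝ) (π/2) ∈ 𝓝[>] (0:ℝ) :=
    Ioo_mem_nhdsGT_of_mem ⟨le_refl 0, by positivity⟩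
  have hup : Tendsto (fun α : ℝ => Real.sqrt ((α / Real.sin (2*α))^2 + α^6))
      (𝓝[>] (0:ℝ)) (𝓝 (1/2)) := by
    have h6 : Tendsto (fun α : ℝ => α^6) (𝓝[>] (0:ℝ)) (𝓝 (0:ℝ)) := by
      simpa using ((continuous_pow 6).tendsto (0:ℝ)).mono_left nhdsWithin_le_nhds
    have h := (Real.continuous_sqrt.tendsto ((1/2:ℝ)^2 + 0)).comp ((tendsto_g.pow 2).add h6)
    rw [sqrt_lim_aux] at h
    exact h
  apply tendsto_of_tendsto_of_tendsto_of_le_of_le' tendsto_g hup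
  · filter_upwards [hio] with x hx
    obtain ⟨h0, h2⟩ := hx
    have h := spec_lower3 x h0 h2
    calc x / Real.sin (2*x) = x * (Real.sin (2*x))⁻¹ := div_eq_mul_inv _ _
      _ ≤ _ := mul_le_mul_of_nonneg_left h h0.le
  · filter_upwards [hio] with x hx
    obtain ⟨h0, h2⟩ := hx
    have hs := sin2_pos h0 h2
    have hle := (specNorm_le_frob _).trans_eq (frob3 x h0 h2)
    refine (mul_le_mul_of_nonneg_left hle h0.le).trans_eq ?_
    rw [← Real.sqrt_sq h0.le, ← Real.sqrt_mul (sq_nonneg x)]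
    congr 1
    field_simp
    ring
    rw [Real.sq_sqrt (sq_nonneg x)]

lemma tendsto_spec4 :
    Tendsto (fun α : ℝ => α * specNorm (((exA3 α)ᵀ * exJ3 * exA3 α)⁻¹ * (exA3 α)ᵀ))
      (𝓝[>] (0:ℝ)) (𝓝 (1/2)) := by
  have hio : Set.Ioo (0:ℝ) (π/2) ∈ 𝓝[>] (0:ℝ) :=
    Ioo_mem_nhdsGT_of_mem ⟨le_refl 0, by positivity⟩
  have hup : Tendsto (fun α : ℝ => Real.sqrt ((α / Real.sin (2*α))^2 + α^4))
      (𝓝[>] (0:ℝ)) (𝓝 (1/2)) := by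
    have h6 : Tendsto (fun α : ℝ => α^4) (𝓝[>] (0:ℝ)) (𝓝 (0:ℝ)) := by
      simpa using ((continuous_pow 4).tendsto (0:ℝ)).mono_left nhdsWithin_le_nhds
    have h := (Real.continuous_sqrt.tendsto ((1/2:ℝ)^2 + 0)).comp ((tendsto_g.pow 2).add h6)
    rw [sqrt_lim_aux] at h
    exact h
  apply tendsto_of_tendsto_of_tendsto_of_le_of_le' tendsto_g hup
  · filter_upwards [hio] with x hx
    obtain ⟨h0, h2⟩ := hx
    have h := spec_lower4 x h0 h2
    calc x / Real.sin (2*x) = x * (Real.sin (2*x))⁻¹ := div_eq_mul_inv _ _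
      _ ≤ _ := mul_le_mul_of_nonneg_left h h0.le
  · filter_upwards [hio] with x hx
    obtain ⟨h0, h2⟩ := hx
    have hs := sin2_pos h0 h2
    have hle := (specNorm_le_frob _).trans_eq (frob4 x h0 h2)
    refine (mul_le_mul_of_nonneg_left hle h0.le).trans_eq ?_
    rw [← Real.sqrt_sq h0.le, ← Real.sqrt_mul (sq_nonneg x)]
    congr 1
    field_simp
    ring
    rw [Real.sq_sqrt (sq_nonneg x)]

lemma tendsto_x :
    Tendsto (fun α : ℝ => eNorm (ilsX (exA3 α) exJ3 exb3))
      (𝓝[>] (0:ℝ)) (𝓝 ((Real.sqrt 2)⁻¹)) := by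
  have hio : Set.Ioo (0:ℝ) (π/2) ∈ 𝓝[>] (0:ℝ) :=
    Ioo_mem_nhdsGT_of_mem ⟨le_refl 0, by positivity⟩
  have hc : ContinuousAt (fun x : ℝ => Real.sqrt ((2 * Real.cos x ^ 2)⁻¹ + x ^ 2)) 0 := by
    apply Real.continuous_sqrt.continuousAt.comp
    apply ContinuousAt.add
    · exact ContinuousAt.inv₀ (by fun_prop) (by norm_num)
    · fun_prop
  have h := hc.tendsto.mono_left (nhdsWithin_le_nhds (s := Set.Ioi (0:ℝ)))
  have hval : Real.sqrt ((2 * Real.cos (0:ℝ) ^ 2)⁻¹ + (0:ℝ) ^ 2) = (Real.sqrt 2)⁻¹ := by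
    rw [Real.cos_zero]
    norm_num [Real.sqrt_inv]
  rw [hval] at h
  refine Tendsto.congr' ?_ h
  filter_upwards [hio] with x hx
  exact (eNormX x hx.1 hx.2).symm

lemma tendsto_r :
    Tendsto (fun α : ℝ => eNorm (ilsR (exA3 α) exJ3 exb3))
      (𝓝[>] (0:ℝ)) (𝓝 ((Real.sqrt 2)⁻¹)) := by
  have hio : Set.Ioo (0:ℝ) (π/2) ∈ 𝓝[>] (0:ℝ) :=
    Ioo_mem_nhdsGT_of_mem ⟨le_refl 0, by positivity⟩
  have hc : ContinuousAt (fun x : ℝ => Real.sqrt ((2 * Real.cos x ^ 2)⁻¹)) 0 := by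
    apply Real.continuous_sqrt.continuousAt.comp
    exact ContinuousAt.inv₀ (by fun_prop) (by norm_num)
  have h := hc.tendsto.mono_left (nhdsWithin_le_nhds (s := Set.Ioi (0:ℝ)))
  have hval : Real.sqrt ((2 * Real.cos (0:ℝ) ^ 2)⁻¹) = (Real.sqrt 2)⁻¹ := by
    rw [Real.cos_zero]
    norm_num [Real.sqrt_inv]
  rw [hval] at h
  refine Tendsto.congr' ?_ h
  filter_upwards [hio] with x hx
  exact (eNormR x hx.1 hx.2).symm

end Aux

open Filter Topology in
/-- Second example of the paper: exact formulas for `AᵀJA` and the solution,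
and the asymptotics of `‖x‖₂`, `‖r‖₂`, `‖(AᵀJA)⁻¹‖₂`, `‖(AᵀJA)⁻¹Aᵀ‖₂`
as `α → 0⁺`. -/
theorem stmt_15 :
    (∀ α : ℝ, 0 < α → α ≤ Real.pi / 4 →
      (exA3 α)ᵀ * exJ3 * exA3 α = Matrix.diagonal ![Real.sin (2 * α), (α⁻¹) ^ 2] ∧
      ((exA3 α)ᵀ * exJ3 * exA3 α).PosDef ∧
      ilsX (exA3 α) exJ3 exb3 = ![1 / (Real.sqrt 2 * Real.cos α), α]) ∧
    Tendsto (fun α : ℝ => eNorm (ilsX (exA3 α) exJ3 exb3))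
      (𝓝[>] 0) (𝓝 ((Real.sqrt 2)⁻¹)) ∧
    Tendsto (fun α : ℝ => eNorm (ilsR (exA3 α) exJ3 exb3))
      (𝓝[>] 0) (𝓝 ((Real.sqrt 2)⁻¹)) ∧
    Tendsto (fun α : ℝ => α * specNorm (((exA3 α)ᵀ * exJ3 * exA3 α)⁻¹))
      (𝓝[>] 0) (𝓝 (1 / 2)) ∧
    Tendsto (fun α : ℝ => α * specNorm ((((exA3 α)ᵀ * exJ3 * exA3 α)⁻¹) * (exA3 α)ᵀ))
      (𝓝[>] 0) (𝓝 (1 / 2)) := by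
  constructor
  · intro α h0 h4
    have h2 : α < Real.pi / 2 := lt_of_le_of_lt h4 (by linarith [Real.pi_pos])
    exact ⟨exATJA α, exPosDef α h0 h2, exX α h0 h2⟩
  exact ⟨tendsto_x, tendsto_r, tendsto_spec3, tendsto_spec4⟩
end
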